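/- In G = ℤ² ⋊ ℤ/2ℤ (swap action) with a = ((1,0),0), t = ((0,0),1), if x₁ > 0 > x₂ then the word a^{x₁} t a^{y} t a^{x₂} is not geodesic: the word a^{x₁+x₂} t a^{y} t represents the same element and is strictly shorter. -/

import Mathlib

/-- The coordinate-swapping automorphism of ℤ². -/
def swapAut : MulAut (Multiplicative (ℤ × ℤ)) :=
  AddEquiv.toMultiplicative (AddEquiv.prodComm : (ℤ × ℤ) ≃+ (ℤ × ℤ))

lemma swapAut_sq : swapAut ^ 2 = 1 := by
  ext z : 1
  show swapAut (swapAut z) = z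
  cases z
  rfl

/-- The action of ℤ/2ℤ on ℤ² by swapping the two coordinates. -/
def swapAction : Multiplicative (ZMod 2) →* MulAut (Multiplicative (ℤ × ℤ)) where
  toFun ε := swapAut ^ (Multiplicative.toAdd ε).val
  map_one' := rfl
  map_mul' x y := by
    show swapAut ^ _ = swapAut ^ _ * swapAut ^ _
    rw [← pow_add]
    have key : ∀ m n : ℕ, m % 2 = n % 2 → swapAut ^ m = swapAut ^ n := by
      intro m n h
      rw [← Nat.div_add_mod m 2, ← Nat.div_add_mod n 2, h, pow_add, pow_add,
        pow_mul, pow_mul, swapAut_sq]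
      simp
    apply key
    have := ZMod.val_add (Multiplicative.toAdd x) (Multiplicative.toAdd y)
    simp only [toAdd_mul] at *
    omega

/-- The group G = ℤ² ⋊ ℤ/2ℤ with the swap action. -/
abbrev GG := SemidirectProduct (Multiplicative (ℤ × ℤ)) (Multiplicative (ZMod 2)) swapAction

/-- The generator a = ((1,0), 0). -/
def ga : GG := SemidirectProduct.inl (Multiplicative.ofAdd ((1, 0) : ℤ × ℤ))

/-- The generator t = ((0,0), 1). -/
def gt : GG := SemidirectProduct.inr (Multiplicative.ofAdd (1 : ZMod 2))

/-- The element ((x,y), ε) of G. -/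
def el (x y : ℤ) (ε : ZMod 2) : GG :=
  ⟨Multiplicative.ofAdd (x, y), Multiplicative.ofAdd ε⟩

/-- The generating set A = {a, a⁻¹, t, t⁻¹}. -/
def GenSet : Set GG := {ga, ga⁻¹, gt, gt⁻¹}

/-- `w` is a word over the alphabet A. -/
def IsWord (w : List GG) : Prop := ∀ x ∈ w, x ∈ GenSet

/-- `w` is a word over A representing the group element `g` (via its product). -/
def Represents (w : List GG) (g : GG) : Prop := IsWord w ∧ w.prod = g

/-- The word length of `g`: minimal length of a word over A representing `g`. -/
noncomputable def wordLength (g : GG) : ℕ :=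
  sInf {n | ∃ w : List GG, Represents w g ∧ w.length = n}

/-- A word over A is geodesic if no strictly shorter word over A represents
the same element. -/
def IsGeodesic (w : List GG) : Prop :=
  IsWord w ∧ ∀ v : List GG, IsWord v → v.prod = w.prod → w.length ≤ v.length

open Classical in
/-- The number of t-letters of a word (occurrences of t and t⁻¹). -/
noncomputable def tCount (w : List GG) : ℕ :=
  w.countP (fun x => decide (x = gt ∨ x = gt⁻¹))

/-- The word aˣ over A: x letters `a` if x ≥ 0, |x| letters `a⁻¹` if x < 0. -/
def apow (x : ℤ) : List GG :=
  if 0 ≤ x then List.replicate x.toNat ga else List.replicate (-x).toNat ga⁻¹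

/-- The word metric on G with respect to A. -/
noncomputable def dA (g h : GG) : ℕ := wordLength (g⁻¹ * h)

/-- The point of G reached at time i along the word w (the endpoint if i
exceeds the length of w). -/
def pt (w : List GG) (i : ℕ) : GG := (w.take i).prod

/-- Words u and w synchronously k-fellow travel. -/
def FellowTravels (k : ℕ) (u w : List GG) : Prop :=
  ∀ i : ℕ, dA (pt u i) (pt w i) ≤ k

lemma ga_zpow (x : ℤ) : ga ^ x = SemidirectProduct.inl (Multiplicative.ofAdd ((x, 0) : ℤ × ℤ)) := by
  rw [ga, ← map_zpow]
  congr 1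
  rw [← ofAdd_zsmul]
  congr 1
  simp

lemma apow_prod (x : ℤ) : (apow x).prod = ga ^ x := by
  unfold apow
  split
  · rw [List.prod_replicate, ← zpow_natCast]
    congr 1; omega
  · rw [List.prod_replicate, inv_pow, ← zpow_natCast, ← zpow_neg]
    congr 1; omega

lemma prod_eq_aux (x₁ x₂ y : ℤ) :
    (apow (x₁ + x₂) ++ [gt] ++ apow y ++ [gt]).prod
      = (apow x₁ ++ [gt] ++ apow y ++ [gt] ++ apow x₂).prod := by
  simp only [List.prod_append, List.prod_cons, List.prod_nil, mul_one, apow_prod, ga_zpow]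
  apply SemidirectProduct.ext
  · simp [gt, SemidirectProduct.mul_left]
    have h1 : ∀ z, swapAction (Multiplicative.ofAdd 1) z = swapAut z := fun z => by
      show (swapAut ^ 1) z = _
      rw [pow_one]
    simp only [h1]
    simp [swapAut, AddEquiv.toMultiplicative, ← ofAdd_add, Prod.ext_iff]
  · simp [gt, SemidirectProduct.mul_right]

lemma apow_length (x : ℤ) : (apow x).length = x.natAbs := by
  unfold apow
  split <;> simp <;> omega

lemma apow_isWord (x : ℤ) : IsWord (apow x) := by
  intro g hg
  unfold apow at hg
  split at hg <;> simp at hg <;> simp [GenSet, hg.2]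

lemma isWord_append {u v : List GG} (hu : IsWord u) (hv : IsWord v) : IsWord (u ++ v) := by
  intro g hg
  rcases List.mem_append.mp hg with h | h
  · exact hu g h
  · exact hv g h

lemma isWord_gt : IsWord [gt] := by
  intro g hg
  simp at hg
  subst hg
  simp [GenSet]

/-- If x₁ > 0 > x₂ then a^{x₁} t a^y t a^{x₂} is not geodesic: the strictly
shorter word a^{x₁+x₂} t a^y t represents the same element. -/
theorem opposite_signs_not_geodesic (x₁ x₂ y : ℤ) (h₁ : 0 < x₁) (h₂ : x₂ < 0) :
    (apow (x₁ + x₂) ++ [gt] ++ apow y ++ [gt]).prod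
      = (apow x₁ ++ [gt] ++ apow y ++ [gt] ++ apow x₂).prod ∧
    (apow (x₁ + x₂) ++ [gt] ++ apow y ++ [gt]).length
      < (apow x₁ ++ [gt] ++ apow y ++ [gt] ++ apow x₂).length ∧
    ¬ IsGeodesic (apow x₁ ++ [gt] ++ apow y ++ [gt] ++ apow x₂) := by
  have hprod := prod_eq_aux x₁ x₂ y
  have hlen : (apow (x₁ + x₂) ++ [gt] ++ apow y ++ [gt]).length
      < (apow x₁ ++ [gt] ++ apow y ++ [gt] ++ apow x₂).length := by
    simp [apow_length]
    omega
  refine ⟨hprod, hlen, ?_⟩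
  rintro ⟨-, hmin⟩
  have hw : IsWord (apow (x₁ + x₂) ++ [gt] ++ apow y ++ [gt]) :=
    isWord_append (isWord_append (isWord_append (apow_isWord _) isWord_gt) (apow_isWord _))
      isWord_gt
  have := hmin _ hw hprod
  omega
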